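/- arXiv:1611.00745 — 4 statements merged into one kernel-verified Lean document; each statement's English description precedes it below -/
import Mathlib

section
/- Let n ≥ 1, 0 ≤ n₁, n₂ ≤ n with (n₁, n₂) ≠ (n, n), and let S_{n₁n₂} ⊆ ℝ^{n×n} be the span of {e^(i) : i ≤ n₁} ∪ {ẽ^(j) : j ≤ n₂}. Let χ^(ij) be the matrix with 1 in entry (i,j) and 0 elsewhere. Then the squared norm of the orthogonal projection of χ^(ij) onto S_{n₁n₂} equals ζ_{ij}/n, where ζ_{ij} = 2 − (2n − n₁ − n₂)/(n² − n₁n₂) if i ≤ n₁ and j ≤ n₂; ζ_{ij} = 1 + n₂/(n² − n₁n₂) if i ≤ n₁ and j > n₂; ζ_{ij} = 1 + n₁/(n² − n₁n₂) if i > n₁ and j ≤ n₂; and ζ_{ij} = 0 if i > n₁ and j > n₂. -/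
open Finset

noncomputable section

/-- Row indicator matrix as an element of Euclidean space `ℝ^{n×n}`. -/
def rowInd (n : ℕ) (i : Fin n) : EuclideanSpace ℝ (Fin n × Fin n) :=
  WithLp.toLp 2 (fun p => if p.1 = i then 1 else 0)

/-- Column indicator matrix as an element of Euclidean space `ℝ^{n×n}`. -/
def colInd (n : ℕ) (j : Fin n) : EuclideanSpace ℝ (Fin n × Fin n) :=
  WithLp.toLp 2 (fun p => if p.2 = j then 1 else 0)

/-- The subspace `S_{n₁ n₂}` spanned by the first `n₁` row indicators and the
first `n₂` column indicators. -/
def spanS (n n₁ n₂ : ℕ) : Submodule ℝ (EuclideanSpace ℝ (Fin n × Fin n)) :=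
  Submodule.span ℝ
    ({x | ∃ i : Fin n, (i : ℕ) < n₁ ∧ x = rowInd n i} ∪
     {x | ∃ j : Fin n, (j : ℕ) < n₂ ∧ x = colInd n j})

lemma card_filter_val_lt (n m : ℕ) (h : m ≤ n) :
    ((Finset.univ : Finset (Fin n)).filter (fun x : Fin n => (x:ℕ) < m)).card = m := by
  rcases eq_or_lt_of_le h with rfl | hm
  · rw [Finset.filter_true_of_mem, Finset.card_univ, Fintype.card_fin]
    exact fun x _ => x.isLt
  · have : (Finset.univ : Finset (Fin n)).filter (fun x : Fin n => (x:ℕ) < m)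
        = Finset.Iio ⟨m, hm⟩ := by
      ext x; simp [Fin.lt_def]
    rw [this, Fin.card_Iio]

theorem stmt5 (n n₁ n₂ : ℕ) (hn : 1 ≤ n) (h1 : n₁ ≤ n) (h2 : n₂ ≤ n)
    (hne : ¬(n₁ = n ∧ n₂ = n)) (i j : Fin n) :
    ‖((spanS n n₁ n₂).orthogonalProjection (EuclideanSpace.single (i, j) (1 : ℝ))
        : EuclideanSpace ℝ (Fin n × Fin n))‖ ^ 2 =
      (if (i : ℕ) < n₁ ∧ (j : ℕ) < n₂ then
          2 - (2 * n - n₁ - n₂ : ℝ) / ((n : ℝ) ^ 2 - (n₁ : ℝ) * n₂)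
        else if (i : ℕ) < n₁ then 1 + (n₂ : ℝ) / ((n : ℝ) ^ 2 - (n₁ : ℝ) * n₂)
        else if (j : ℕ) < n₂ then 1 + (n₁ : ℝ) / ((n : ℝ) ^ 2 - (n₁ : ℝ) * n₂)
        else 0) / n := by
  classical
  have hn0 : (n:ℝ) ≠ 0 := by positivity
  have hD : (0:ℝ) < (n:ℝ)^2 - (n₁:ℝ)*(n₂:ℝ) := by
    have h12 : n₁ * n₂ < n * n := by
      rcases not_and_or.mp hne with h | h
      · have hlt : n₁ < n := lt_of_le_of_ne h1 h
        nlinarith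
      · have hlt : n₂ < n := lt_of_le_of_ne h2 h
        nlinarith
    have : (n₁:ℝ) * n₂ < (n:ℝ) * n := by exact_mod_cast h12
    nlinarith
  have hDne : ((n:ℝ)^2 - (n₁:ℝ)*(n₂:ℝ)) ≠ 0 := ne_of_gt hD
  set χ : EuclideanSpace ℝ (Fin n × Fin n) := EuclideanSpace.single (i, j) (1 : ℝ) with hχ
  set u : ℝ := if (i:ℕ) < n₁ then 1 else 0 with hu
  set v : ℝ := if (j:ℕ) < n₂ then 1 else 0 with hv
  set A : ℝ := ((n:ℝ)*u - (n₁:ℝ)*v)/((n:ℝ)^2 - (n₁:ℝ)*(n₂:ℝ)) with hA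
  set B : ℝ := ((n:ℝ)*v - (n₂:ℝ)*u)/((n:ℝ)^2 - (n₁:ℝ)*(n₂:ℝ)) with hB
  have hBid : (v - (n₂:ℝ)*A)/n = B := by
    rw [hA, hB, div_eq_div_iff hn0 hDne, sub_mul, mul_assoc, div_mul_cancel₀ _ hDne]; ring
  have hAid : (u - (n₁:ℝ)*B)/n = A := by
    rw [hA, hB, div_eq_div_iff hn0 hDne, sub_mul, mul_assoc, div_mul_cancel₀ _ hDne]; ring
  set p : EuclideanSpace ℝ (Fin n × Fin n) := WithLp.toLp 2 (fun q : Fin n × Fin n =>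
    (if (q.1:ℕ) < n₁ then ((if q.1 = i then (1:ℝ) else 0) - B)/n else 0)
    + (if (q.2:ℕ) < n₂ then ((if q.2 = j then (1:ℝ) else 0) - A)/n else 0)) with hp
  -- membership
  have hpmem : p ∈ spanS n n₁ n₂ := by
    have hpe : p = (∑ k ∈ Finset.univ.filter (fun k : Fin n => (k:ℕ) < n₁),
        (((if k = i then (1:ℝ) else 0) - B)/n) • rowInd n k)
      + (∑ l ∈ Finset.univ.filter (fun l : Fin n => (l:ℕ) < n₂),
        (((if l = j then (1:ℝ) else 0) - A)/n) • colInd n l) := by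
      ext q
      have e1 : (∑ k ∈ Finset.univ.filter (fun k : Fin n => (k:ℕ) < n₁),
          (((if k = i then (1:ℝ) else 0) - B)/n) • rowInd n k) q
          = ∑ k ∈ Finset.univ.filter (fun k : Fin n => (k:ℕ) < n₁),
            (((if k = i then (1:ℝ) else 0) - B)/n) * (if q.1 = k then 1 else 0) := by
        rw [WithLp.ofLp_sum, Finset.sum_apply]; rfl
      have e2 : (∑ l ∈ Finset.univ.filter (fun l : Fin n => (l:ℕ) < n₂),
          (((if l = j then (1:ℝ) else 0) - A)/n) • colInd n l) q
          = ∑ l ∈ Finset.univ.filter (fun l : Fin n => (l:ℕ) < n₂),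
            (((if l = j then (1:ℝ) else 0) - A)/n) * (if q.2 = l then 1 else 0) := by
        rw [WithLp.ofLp_sum, Finset.sum_apply]; rfl
      rw [WithLp.ofLp_add, Pi.add_apply]
      rw [e1, e2]
      simp only [mul_ite, mul_one, mul_zero]
      rw [Finset.sum_ite_eq, Finset.sum_ite_eq]
      simp [hp]
    rw [hpe]
    apply Submodule.add_mem
    · apply Submodule.sum_mem
      intro k hk
      apply Submodule.smul_mem
      exact Submodule.subset_span (Or.inl ⟨k, (Finset.mem_filter.mp hk).2, rfl⟩)
    · apply Submodule.sum_mem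
      intro l hl
      apply Submodule.smul_mem
      exact Submodule.subset_span (Or.inr ⟨l, (Finset.mem_filter.mp hl).2, rfl⟩)
  -- row sums of p
  have hsum_row : ∀ k : Fin n, ∑ b : Fin n, p (k, b)
      = (if (k:ℕ) < n₁ then ((if k = i then (1:ℝ) else 0) - B) else 0) + B := by
    intro k
    have : ∑ b : Fin n, p (k, b)
        = (∑ b : Fin n, (if (k:ℕ) < n₁ then ((if k = i then (1:ℝ) else 0) - B)/n else 0))
        + ∑ b : Fin n, (if (b:ℕ) < n₂ then ((if b = j then (1:ℝ) else 0) - A)/n else 0) := by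
      rw [← Finset.sum_add_distrib]
    rw [this]
    have c1 : (∑ _b : Fin n, (if (k:ℕ) < n₁ then ((if k = i then (1:ℝ) else 0) - B)/n else 0))
        = (if (k:ℕ) < n₁ then ((if k = i then (1:ℝ) else 0) - B) else 0) := by
      rw [Finset.sum_const, Finset.card_univ, Fintype.card_fin, nsmul_eq_mul]
      split
      · field_simp
      · simp
    have c2 : (∑ b : Fin n, (if (b:ℕ) < n₂ then ((if b = j then (1:ℝ) else 0) - A)/n else 0))
        = B := by
      rw [← Finset.sum_filter]
      have : ∑ b ∈ Finset.univ.filter (fun b : Fin n => (b:ℕ) < n₂),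
          ((if b = j then (1:ℝ) else 0) - A)/n
          = ((∑ b ∈ Finset.univ.filter (fun b : Fin n => (b:ℕ) < n₂),
              (if b = j then (1:ℝ) else 0)) - n₂ * A)/n := by
        rw [← Finset.sum_div, Finset.sum_sub_distrib,
          Finset.sum_const, card_filter_val_lt n n₂ h2, nsmul_eq_mul]
      rw [this, Finset.sum_ite_eq']
      simp only [Finset.mem_filter, Finset.mem_univ, true_and]
      rw [← hv, hBid]
    rw [c1, c2]
  -- column sums of p
  have hsum_col : ∀ l : Fin n, ∑ a : Fin n, p (a, l)
      = A + (if (l:ℕ) < n₂ then ((if l = j then (1:ℝ) else 0) - A) else 0) := by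
    intro l
    have : ∑ a : Fin n, p (a, l)
        = (∑ a : Fin n, (if (a:ℕ) < n₁ then ((if a = i then (1:ℝ) else 0) - B)/n else 0))
        + ∑ a : Fin n, (if (l:ℕ) < n₂ then ((if l = j then (1:ℝ) else 0) - A)/n else 0) := by
      rw [← Finset.sum_add_distrib]
    rw [this]
    have c1 : (∑ a : Fin n, (if (a:ℕ) < n₁ then ((if a = i then (1:ℝ) else 0) - B)/n else 0))
        = A := by
      rw [← Finset.sum_filter]
      have : ∑ a ∈ Finset.univ.filter (fun a : Fin n => (a:ℕ) < n₁),
          ((if a = i then (1:ℝ) else 0) - B)/n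
          = ((∑ a ∈ Finset.univ.filter (fun a : Fin n => (a:ℕ) < n₁),
              (if a = i then (1:ℝ) else 0)) - n₁ * B)/n := by
        rw [← Finset.sum_div, Finset.sum_sub_distrib,
          Finset.sum_const, card_filter_val_lt n n₁ h1, nsmul_eq_mul]
      rw [this, Finset.sum_ite_eq']
      simp only [Finset.mem_filter, Finset.mem_univ, true_and]
      rw [← hu, hAid]
    have c2 : (∑ _a : Fin n, (if (l:ℕ) < n₂ then ((if l = j then (1:ℝ) else 0) - A)/n else 0))
        = (if (l:ℕ) < n₂ then ((if l = j then (1:ℝ) else 0) - A) else 0) := by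
      rw [Finset.sum_const, Finset.card_univ, Fintype.card_fin, nsmul_eq_mul]
      split
      · field_simp
      · simp
    rw [c1, c2]
  -- inner products with generators
  have hinner_row : ∀ k : Fin n, (k:ℕ) < n₁ → (inner ℝ (χ - p) (rowInd n k) : ℝ) = 0 := by
    intro k hk
    rw [inner_sub_left]
    have hl : (inner ℝ χ (rowInd n k) : ℝ) = if i = k then 1 else 0 := by
      rw [hχ, EuclideanSpace.inner_single_left]
      simp [rowInd]
    have hr : (inner ℝ p (rowInd n k) : ℝ) = ∑ b : Fin n, p (k, b) := by
      simp only [PiLp.inner_apply, RCLike.inner_apply, starRingEnd_apply, star_trivial, rowInd]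
      rw [Fintype.sum_prod_type]
      rw [Finset.sum_comm]
      congr 1 with b
      simp only [ite_mul, one_mul, zero_mul]
      rw [Finset.sum_ite_eq']
      simp
    rw [hl, hr, hsum_row k, if_pos hk]
    ring_nf
    simp [eq_comm]
  have hinner_col : ∀ l : Fin n, (l:ℕ) < n₂ → (inner ℝ (χ - p) (colInd n l) : ℝ) = 0 := by
    intro l hl'
    rw [inner_sub_left]
    have hl : (inner ℝ χ (colInd n l) : ℝ) = if j = l then 1 else 0 := by
      rw [hχ, EuclideanSpace.inner_single_left]
      simp [colInd]
    have hr : (inner ℝ p (colInd n l) : ℝ) = ∑ a : Fin n, p (a, l) := by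
      simp only [PiLp.inner_apply, RCLike.inner_apply, starRingEnd_apply, star_trivial, colInd]
      rw [Fintype.sum_prod_type]
      congr 1 with a
      simp only [ite_mul, one_mul, zero_mul]
      rw [Finset.sum_ite_eq']
      simp
    rw [hl, hr, hsum_col l, if_pos hl']
    ring_nf
    simp [eq_comm]
  have horth : ∀ w ∈ spanS n n₁ n₂, (inner ℝ (χ - p) w : ℝ) = 0 := by
    intro w hw
    induction hw using Submodule.span_induction with
    | mem x hx =>
      rcases hx with ⟨k, hk, rfl⟩ | ⟨l, hl, rfl⟩
      · exact hinner_row k hk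
      · exact hinner_col l hl
    | zero => exact inner_zero_right _
    | add x y _ _ hx hy => rw [inner_add_right, hx, hy, add_zero]
    | smul c x _ hx => rw [inner_smul_right, hx, mul_zero]
  have hproj : ((spanS n n₁ n₂).orthogonalProjection χ : EuclideanSpace ℝ (Fin n × Fin n)) = p :=
    Submodule.eq_starProjection_of_mem_of_inner_eq_zero hpmem horth
  rw [hproj]
  have hnorm : ‖p‖ ^ 2 = p (i, j) := by
    have h0 := horth p hpmem
    rw [inner_sub_left, sub_eq_zero] at h0
    have hip : (inner ℝ χ p : ℝ) = p (i, j) := by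
      rw [hχ, EuclideanSpace.inner_single_left]; simp
    rw [← real_inner_self_eq_norm_sq, ← h0, hip]
  rw [hnorm]
  have hpij : p (i, j) = (if (i:ℕ) < n₁ then (1 - B)/n else 0)
      + (if (j:ℕ) < n₂ then (1 - A)/n else 0) := by
    simp [hp]
  rw [hpij]
  by_cases hi : (i:ℕ) < n₁ <;> by_cases hj : (j:ℕ) < n₂ <;>
    simp only [hA, hB, hu, hv, hi, hj, if_true, if_false, true_and, false_and,
      and_true, and_false, ite_true, ite_false] <;>
    field_simp <;> ring
end
end

section
/- Let n ≥ 1 and let S_{nn} ⊆ ℝ^{n×n} be the span of all row-indicator matrices e^(i) and all column-indicator matrices ẽ^(j). For every 1 ≤ i, j ≤ n, the squared Frobenius norm of the orthogonal projection of the elementary matrix χ^(ij) onto S_{nn} equals (2n − 1)/n². -/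
open Finset
open scoped RealInnerProductSpace

noncomputable section

/-- The subspace `S_{nn}` spanned by all row and all column indicators. -/
def spanSnn (n : ℕ) : Submodule ℝ (EuclideanSpace ℝ (Fin n × Fin n)) :=
  Submodule.span ℝ
    ({x | ∃ i : Fin n, x = rowInd n i} ∪ {x | ∃ j : Fin n, x = colInd n j})

lemma sum_trick {n : ℕ} (i : Fin n) (X Y : ℝ) :
    ∑ a : Fin n, (if a = i then X else Y) = X + ((n : ℝ) - 1) * Y := by
  have h : ∀ a : Fin n, (if a = i then X else Y) = Y + (if a = i then X - Y else 0) := by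
    intro a; by_cases h : a = i <;> simp [h]
  simp only [h, Finset.sum_add_distrib, Finset.sum_const, Finset.card_univ,
    Fintype.card_fin, nsmul_eq_mul, Finset.sum_ite_eq', Finset.mem_univ, if_true]
  ring

theorem stmt6 (n : ℕ) (hn : 1 ≤ n) (i j : Fin n) :
    ‖((spanSnn n).orthogonalProjectionOnto (EuclideanSpace.single (i, j) (1 : ℝ))
        : EuclideanSpace ℝ (Fin n × Fin n))‖ ^ 2 = (2 * n - 1 : ℝ) / (n : ℝ) ^ 2 := by
  have hn0 : (n : ℝ) ≠ 0 := by positivity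
  set v : EuclideanSpace ℝ (Fin n × Fin n) := EuclideanSpace.single (i, j) (1 : ℝ) with hv
  set w : EuclideanSpace ℝ (Fin n × Fin n) :=
    (1 / n : ℝ) • rowInd n i + (1 / n : ℝ) • colInd n j
      - (1 / (n : ℝ) ^ 2) • ∑ k, rowInd n k with hwdef
  have hrow : ∀ k, rowInd n k ∈ spanSnn n := fun k =>
    Submodule.subset_span (Or.inl ⟨k, rfl⟩)
  have hcol : ∀ k, colInd n k ∈ spanSnn n := fun k =>
    Submodule.subset_span (Or.inr ⟨k, rfl⟩)
  have hw : w ∈ spanSnn n := by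
    refine Submodule.sub_mem _ (Submodule.add_mem _ ?_ ?_) ?_
    · exact Submodule.smul_mem _ _ (hrow i)
    · exact Submodule.smul_mem _ _ (hcol j)
    · exact Submodule.smul_mem _ _ (Submodule.sum_mem _ fun k _ => hrow k)
  -- pointwise values
  have hwval : ∀ a b : Fin n, w (a, b) =
      (1 / n : ℝ) * (if a = i then 1 else 0) + (1 / n : ℝ) * (if b = j then 1 else 0)
        - 1 / (n : ℝ) ^ 2 := by
    intro a b
    have hsum : (∑ k, rowInd n k) (a, b) = 1 := by
      rw [WithLp.ofLp_sum, Finset.sum_apply]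
      simp [rowInd, Finset.sum_ite_eq]
    simp only [hwdef, PiLp.sub_apply, PiLp.add_apply, PiLp.smul_apply, smul_eq_mul, hsum]
    simp only [rowInd, colInd, mul_one]
  have hvval : ∀ a b : Fin n, v (a, b) =
      (if a = i then 1 else 0) * (if b = j then 1 else 0) := by
    intro a b
    simp only [hv, EuclideanSpace.single_apply, Prod.mk.injEq]
    by_cases ha : a = i <;> by_cases hb : b = j <;> simp [ha, hb]
  -- orthogonality
  have horth : ∀ x ∈ spanSnn n, (inner ℝ (v - w) x : ℝ) = 0 := by
    have hgen : ∀ x ∈ ({x | ∃ k : Fin n, x = rowInd n k} ∪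
        {x | ∃ k : Fin n, x = colInd n k} :
        Set (EuclideanSpace ℝ (Fin n × Fin n))), (inner ℝ (v - w) x : ℝ) = 0 := by
      rintro x (⟨k, rfl⟩ | ⟨k, rfl⟩)
      · rw [PiLp.inner_apply]
        simp only [RCLike.inner_apply, conj_trivial]
        rw [Fintype.sum_prod_type]
        have key : ∀ a b : Fin n, (v - w) (a, b) * rowInd n k (a, b) =
            (if a = k then ((if a = i then 1 else 0) * (if b = j then 1 else 0)
              - ((1 / n : ℝ) * (if a = i then 1 else 0)
                + (1 / n : ℝ) * (if b = j then 1 else 0) - 1 / (n : ℝ) ^ 2)) else 0) := by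
          intro a b
          have h1 : (v - w) (a, b) = v (a, b) - w (a, b) := rfl
          rw [h1, hvval, hwval]
          by_cases h : a = k <;> simp [rowInd, h]
        simp only [mul_comm ((rowInd n k).ofLp _), key]
        rw [Finset.sum_comm]
        simp only [Finset.sum_ite_eq', Finset.mem_univ, if_true]
        have form : ∀ b : Fin n,
            ((if k = i then 1 else 0) * (if b = j then 1 else 0)
              - ((1 / n : ℝ) * (if k = i then 1 else 0)
                + (1 / n : ℝ) * (if b = j then 1 else 0) - 1 / (n : ℝ) ^ 2)) =
            (if b = j then ((if k = i then (1:ℝ) else 0)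
                - ((1 / n : ℝ) * (if k = i then 1 else 0) + 1 / n - 1 / (n : ℝ) ^ 2))
              else (0 - ((1 / n : ℝ) * (if k = i then 1 else 0) - 1 / (n : ℝ) ^ 2))) := by
          intro b; by_cases hb : b = j <;> simp [hb]
        rw [Finset.sum_congr rfl fun b _ => form b, sum_trick]
        by_cases hk : k = i <;> simp only [hk, if_true, if_false, if_pos, if_neg] <;>
          field_simp <;> ring
      · rw [PiLp.inner_apply]
        simp only [RCLike.inner_apply, conj_trivial]
        rw [Fintype.sum_prod_type]
        have key : ∀ a b : Fin n, (v - w) (a, b) * colInd n k (a, b) =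
            (if b = k then ((if a = i then 1 else 0) * (if b = j then 1 else 0)
              - ((1 / n : ℝ) * (if a = i then 1 else 0)
                + (1 / n : ℝ) * (if b = j then 1 else 0) - 1 / (n : ℝ) ^ 2)) else 0) := by
          intro a b
          have h1 : (v - w) (a, b) = v (a, b) - w (a, b) := rfl
          rw [h1, hvval, hwval]
          by_cases h : b = k <;> simp [colInd, h]
        simp only [mul_comm ((colInd n k).ofLp _), key, Finset.sum_ite_eq', Finset.mem_univ, if_true]
        have form : ∀ a : Fin n,
            ((if a = i then 1 else 0) * (if k = j then 1 else 0)
              - ((1 / n : ℝ) * (if a = i then 1 else 0)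
                + (1 / n : ℝ) * (if k = j then 1 else 0) - 1 / (n : ℝ) ^ 2)) =
            (if a = i then ((if k = j then (1:ℝ) else 0)
                - (1 / n + (1 / n : ℝ) * (if k = j then 1 else 0) - 1 / (n : ℝ) ^ 2))
              else (0 - ((1 / n : ℝ) * (if k = j then 1 else 0) - 1 / (n : ℝ) ^ 2))) := by
          intro a; by_cases ha : a = i <;> simp [ha]
        rw [Finset.sum_congr rfl fun a _ => form a, sum_trick]
        by_cases hk : k = j <;> simp only [hk, if_true, if_false, if_pos, if_neg] <;>
          field_simp <;> ring
    intro x hx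
    refine Submodule.span_induction hgen ?_ ?_ ?_ hx
    · exact inner_zero_right _
    · intro a b _ _ ha hb; rw [inner_add_right, ha, hb, add_zero]
    · intro r a _ ha; rw [inner_smul_right, ha, mul_zero]
  have hproj : ((spanSnn n).orthogonalProjectionOnto v : EuclideanSpace ℝ (Fin n × Fin n)) = w :=
    Submodule.eq_starProjection_of_mem_of_inner_eq_zero hw horth
  rw [hproj]
  -- compute the norm of w
  rw [← real_inner_self_eq_norm_sq, PiLp.inner_apply]
  simp only [RCLike.inner_apply, conj_trivial]
  rw [Fintype.sum_prod_type]
  have hcases : ∀ a b : Fin n, w (a, b) * w (a, b) =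
      if a = i then (if b = j then (2 / n - 1 / (n : ℝ) ^ 2) ^ 2
        else (1 / n - 1 / (n : ℝ) ^ 2) ^ 2)
      else (if b = j then (1 / n - 1 / (n : ℝ) ^ 2) ^ 2 else (1 / (n : ℝ) ^ 2) ^ 2) := by
    intro a b
    rw [hwval]
    by_cases ha : a = i <;> by_cases hb : b = j <;> simp [ha, hb] <;> ring
  simp only [hcases]
  have hinner : ∀ a : Fin n,
      (∑ b : Fin n, if a = i then (if b = j then (2 / n - 1 / (n : ℝ) ^ 2) ^ 2
        else (1 / n - 1 / (n : ℝ) ^ 2) ^ 2)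
      else (if b = j then (1 / n - 1 / (n : ℝ) ^ 2) ^ 2 else (1 / (n : ℝ) ^ 2) ^ 2)) =
      if a = i then ((2 / n - 1 / (n : ℝ) ^ 2) ^ 2
          + ((n : ℝ) - 1) * (1 / n - 1 / (n : ℝ) ^ 2) ^ 2)
        else ((1 / n - 1 / (n : ℝ) ^ 2) ^ 2 + ((n : ℝ) - 1) * (1 / (n : ℝ) ^ 2) ^ 2) := by
    intro a
    by_cases ha : a = i <;> simp only [ha, if_true, if_false, sum_trick (n := n) j]
  simp only [hinner, sum_trick (n := n) i]
  field_simp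
  ring

end
end

section
/- Let n ≥ 1 and q ∈ ℝ^{n×n}, and let q_{∥S} denote the orthogonal projection of q onto the subspace S_{nn} spanned by all row- and column-indicator matrices. Then ‖q_{∥S}‖² = (1/n)·( Σ_i (Σ_j q_{ij})² + Σ_j (Σ_i q_{ij})² − (1/n)(Σ_{ij} q_{ij})² ). -/
open Finset

noncomputable section

theorem stmt9 (n : ℕ) (hn : 1 ≤ n) (q : EuclideanSpace ℝ (Fin n × Fin n)) :
    ‖((spanSnn n).orthogonalProjectionOnto q : EuclideanSpace ℝ (Fin n × Fin n))‖ ^ 2 =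
      (1 / n) * ((∑ i : Fin n, (∑ j : Fin n, q (i, j)) ^ 2)
        + (∑ j : Fin n, (∑ i : Fin n, q (i, j)) ^ 2)
        - (1 / n) * (∑ i : Fin n, ∑ j : Fin n, q (i, j)) ^ 2) := by
  have hn0 : (n : ℝ) ≠ 0 := Nat.cast_ne_zero.mpr (by omega)
  set r : Fin n → ℝ := fun i => ∑ j, q (i, j) with hr
  set c : Fin n → ℝ := fun j => ∑ i, q (i, j) with hcdef
  set s : ℝ := ∑ i, ∑ j, q (i, j) with hs
  have hrs : ∑ i, r i = s := rfl
  have hcs : ∑ j, c j = s := Finset.sum_comm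
  set a : Fin n → ℝ := fun i => r i / n - s / (2 * n ^ 2) with ha
  set b : Fin n → ℝ := fun j => c j / n - s / (2 * n ^ 2) with hb
  set v : EuclideanSpace ℝ (Fin n × Fin n) :=
    (∑ i, a i • rowInd n i) + (∑ j, b j • colInd n j) with hvdef
  have hv : ∀ x : Fin n × Fin n, v x = r x.1 / n + c x.2 / n - s / n ^ 2 := by
    intro x
    have h0 : v x = (∑ i, a i • rowInd n i) x + (∑ j, b j • colInd n j) x := rfl
    rw [h0, WithLp.ofLp_sum, WithLp.ofLp_sum, Finset.sum_apply x univ (fun i => (a i • rowInd n i).ofLp),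
      Finset.sum_apply x univ (fun j => (b j • colInd n j).ofLp)]
    simp only [PiLp.smul_apply, smul_eq_mul, rowInd, colInd, PiLp.toLp_apply, mul_ite, mul_one, mul_zero]
    simp only [Finset.sum_ite_eq, Finset.mem_univ, if_true, ha, hb]
    ring
  -- membership
  have hvmem : v ∈ spanSnn n := by
    apply Submodule.add_mem
    · exact Submodule.sum_mem _ fun i _ => Submodule.smul_mem _ _
        (Submodule.subset_span (Or.inl ⟨i, rfl⟩))
    · exact Submodule.sum_mem _ fun j _ => Submodule.smul_mem _ _
        (Submodule.subset_span (Or.inr ⟨j, rfl⟩))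
  -- orthogonality
  have hinner : ∀ w : EuclideanSpace ℝ (Fin n × Fin n),
      inner ℝ (q - v) w = ∑ x : Fin n × Fin n, (q x - v x) * w x := by
    intro w
    rw [real_inner_comm]
    simp [PiLp.inner_apply, RCLike.inner_apply, mul_comm]
  have hrowsum : ∀ i : Fin n, ∑ j : Fin n, v (i, j) = r i := by
    intro i
    simp only [hv]
    rw [Finset.sum_sub_distrib, Finset.sum_add_distrib, Finset.sum_const, ← Finset.sum_div,
      hcs, Finset.sum_const, card_univ, Fintype.card_fin, nsmul_eq_mul]
    field_simp
    ring_nf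
    field_simp
    ring
  have hcolsum : ∀ j : Fin n, ∑ i : Fin n, v (i, j) = c j := by
    intro j
    simp only [hv]
    rw [Finset.sum_sub_distrib, Finset.sum_add_distrib, Finset.sum_const, ← Finset.sum_div,
      hrs, Finset.sum_const, card_univ, Fintype.card_fin, nsmul_eq_mul]
    field_simp
    ring_nf
    field_simp
    ring
  have hortho : ∀ w ∈ spanSnn n, inner ℝ (q - v) w = (0 : ℝ) := by
    intro w hw
    induction hw using Submodule.span_induction with
    | mem x hx =>
      rcases hx with ⟨i, rfl⟩ | ⟨j, rfl⟩
      · rw [hinner]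
        simp only [rowInd, PiLp.toLp_apply, mul_ite, mul_one, mul_zero]
        rw [Fintype.sum_prod_type]
        have hpull : ∀ x : Fin n, (∑ y : Fin n, if x = i then q (x, y) - v (x, y) else 0)
            = if x = i then ∑ y : Fin n, (q (x, y) - v (x, y)) else 0 := by
          intro x; split <;> simp
        simp only [hpull, Finset.sum_ite_eq, Finset.sum_ite_eq', Finset.mem_univ, if_true]
        rw [Finset.sum_sub_distrib]
        rw [show (∑ j : Fin n, q (i, j)) = r i from rfl, hrowsum i, sub_self]
      · rw [hinner]
        simp only [colInd, PiLp.toLp_apply, mul_ite, mul_one, mul_zero]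
        rw [Fintype.sum_prod_type_right]
        have hpull : ∀ x : Fin n, (∑ y : Fin n, if x = j then q (y, x) - v (y, x) else 0)
            = if x = j then ∑ y : Fin n, (q (y, x) - v (y, x)) else 0 := by
          intro x; split <;> simp
        simp only [hpull, Finset.sum_ite_eq, Finset.sum_ite_eq', Finset.mem_univ, if_true]
        rw [Finset.sum_sub_distrib]
        rw [show (∑ i : Fin n, q (i, j)) = c j from rfl, hcolsum j, sub_self]
    | zero => exact inner_zero_right _
    | add x y hx hy ihx ihy => rw [inner_add_right, ihx, ihy, add_zero]
    | smul t x hx ihx => rw [real_inner_smul_right, ihx, mul_zero]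
  have hproj : ((spanSnn n).orthogonalProjectionOnto q : EuclideanSpace ℝ (Fin n × Fin n)) = v :=
    Submodule.eq_starProjection_of_mem_of_inner_eq_zero hvmem hortho
  rw [hproj]
  -- norm computation
  have hnorm : ‖v‖ ^ 2 = ∑ x : Fin n × Fin n, (v x) ^ 2 := by
    rw [EuclideanSpace.norm_eq, Real.sq_sqrt (by positivity)]
    simp [Real.norm_eq_abs, sq_abs]
  rw [hnorm, Fintype.sum_prod_type]
  have einner : ∀ i : Fin n, ∑ j : Fin n, (v (i, j)) ^ 2
      = (n : ℝ) * (r i / n - s / n ^ 2) ^ 2 + (2 * (s / n)) * (r i / n - s / n ^ 2)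
        + (∑ j, (c j) ^ 2) / n ^ 2 := by
    intro i
    have hterm : ∀ j : Fin n, (v (i, j)) ^ 2
        = (r i / n - s / n ^ 2) ^ 2 + (2 * (r i / n - s / n ^ 2) / n) * (c j)
          + (c j) ^ 2 / n ^ 2 := by
      intro j; rw [hv]; ring
    simp only [hterm]
    rw [Finset.sum_add_distrib, Finset.sum_add_distrib, Finset.sum_const, card_univ,
      Fintype.card_fin, nsmul_eq_mul, ← Finset.mul_sum, hcs, ← Finset.sum_div]
    field_simp
  simp only [einner]
  rw [Finset.sum_add_distrib, Finset.sum_add_distrib, Finset.sum_const, card_univ,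
    Fintype.card_fin, nsmul_eq_mul, ← Finset.mul_sum, ← Finset.mul_sum]
  have h1 : ∑ i : Fin n, (r i / n - s / n ^ 2) ^ 2
      = (∑ i, (r i) ^ 2) / n ^ 2 - s ^ 2 / n ^ 3 := by
    have hterm : ∀ i : Fin n, (r i / n - s / n ^ 2) ^ 2
        = (r i) ^ 2 / n ^ 2 - 2 * s / n ^ 3 * r i + s ^ 2 / n ^ 4 := by
      intro i; ring
    simp only [hterm]
    rw [Finset.sum_add_distrib, Finset.sum_sub_distrib, ← Finset.sum_div, ← Finset.mul_sum,
      hrs, Finset.sum_const, card_univ, Fintype.card_fin, nsmul_eq_mul]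
    field_simp
    ring
  have h2 : ∑ i : Fin n, (r i / n - s / n ^ 2) = 0 := by
    rw [Finset.sum_sub_distrib, ← Finset.sum_div, hrs, Finset.sum_const, card_univ,
      Fintype.card_fin, nsmul_eq_mul]
    field_simp
    ring
  rw [h1, h2]
  field_simp
  ring

end
end

section
/- Let n ≥ 1, 0 ≤ n₁, n₂ ≤ n with (n₁,n₂) ≠ (n,n), and let ζ ∈ ℝ^{n×n} be defined by ζ_{ij} = 2 − (2n − n₁ − n₂)/(n² − n₁n₂) if i ≤ n₁, j ≤ n₂; ζ_{ij} = 1 + n₂/(n² − n₁n₂) if i ≤ n₁, j > n₂; ζ_{ij} = 1 + n₁/(n² − n₁n₂) if i > n₁, j ≤ n₂; and ζ_{ij} = 0 otherwise. Then 0 ≤ ζ_{ij} ≤ 2 for all i, j, and Σ_{ij} ζ_{ij} = n(n₁ + n₂). -/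
open Finset

lemma sum_ite_lt_const (n m : ℕ) (hm : m ≤ n) (a b : ℝ) :
    ∑ j : Fin n, (if (j : ℕ) < m then a else b) = m * a + ((n : ℝ) - m) * b := by
  rw [Fin.sum_univ_eq_sum_range (fun j => if j < m then a else b)]
  rw [Finset.sum_ite]
  have h1 : (Finset.range n).filter (fun j => j < m) = Finset.range m := by
    ext x; simp; omega
  have h2 : (Finset.range n).filter (fun j => ¬ j < m) = Finset.Ico m n := by
    ext x; simp; omega
  rw [h1, h2, Finset.sum_const, Finset.sum_const, Nat.card_Ico, Finset.card_range]
  rw [nsmul_eq_mul, nsmul_eq_mul, Nat.cast_sub hm]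

theorem stmt12 (n n₁ n₂ : ℕ) (hn : 1 ≤ n) (h1 : n₁ ≤ n) (h2 : n₂ ≤ n)
    (hne : ¬(n₁ = n ∧ n₂ = n))
    (ζ : Fin n → Fin n → ℝ)
    (hζ : ∀ i j : Fin n,
      ζ i j = if (i : ℕ) < n₁ ∧ (j : ℕ) < n₂ then
          2 - (2 * n - n₁ - n₂ : ℝ) / ((n : ℝ)^2 - (n₁ : ℝ) * n₂)
        else if (i : ℕ) < n₁ then 1 + (n₂ : ℝ) / ((n : ℝ)^2 - (n₁ : ℝ) * n₂)
        else if (j : ℕ) < n₂ then 1 + (n₁ : ℝ) / ((n : ℝ)^2 - (n₁ : ℝ) * n₂)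
        else 0) :
    (∀ i j : Fin n, 0 ≤ ζ i j ∧ ζ i j ≤ 2) ∧
    (∑ i : Fin n, ∑ j : Fin n, ζ i j) = (n : ℝ) * ((n₁ : ℝ) + n₂) := by
  have hcase : n₁ < n ∨ n₂ < n := by omega
  have hnR : (1 : ℝ) ≤ n := by exact_mod_cast hn
  have h1R : (n₁ : ℝ) ≤ n := by exact_mod_cast h1
  have h2R : (n₂ : ℝ) ≤ n := by exact_mod_cast h2
  have hcaseR : (n₁ : ℝ) + 1 ≤ n ∨ (n₂ : ℝ) + 1 ≤ n := by
    rcases hcase with h | h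
    · left; exact_mod_cast h
    · right; exact_mod_cast h
  have hD : (0 : ℝ) < (n : ℝ)^2 - (n₁ : ℝ) * n₂ := by
    rcases hcaseR with h | h <;> nlinarith [Nat.cast_nonneg (α := ℝ) n₁, Nat.cast_nonneg (α := ℝ) n₂]
  have hn1 : (0 : ℝ) ≤ (n₁ : ℝ) := Nat.cast_nonneg _
  have hn2 : (0 : ℝ) ≤ (n₂ : ℝ) := Nat.cast_nonneg _
  constructor
  · intro i j
    rw [hζ]
    split_ifs with hA hB hC
    · constructor
      · rw [sub_nonneg, div_le_iff₀ hD]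
        nlinarith
      · have : (0 : ℝ) ≤ (2 * n - n₁ - n₂ : ℝ) / ((n : ℝ)^2 - (n₁ : ℝ) * n₂) := by
          apply div_nonneg _ hD.le
          nlinarith
        linarith
    · constructor
      · have := div_nonneg hn2 hD.le
        linarith
      · have : (n₂ : ℝ) / ((n : ℝ)^2 - (n₁ : ℝ) * n₂) ≤ 1 := by
          rw [div_le_one hD]
          rcases hcaseR with h | h <;> nlinarith
        linarith
    · constructor
      · have := div_nonneg hn1 hD.le
        linarith
      · have : (n₁ : ℝ) / ((n : ℝ)^2 - (n₁ : ℝ) * n₂) ≤ 1 := by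
          rw [div_le_one hD]
          rcases hcaseR with h | h <;> nlinarith
        linarith
    · norm_num
  · have hrow : ∀ i : Fin n, ∑ j : Fin n, ζ i j =
        if (i : ℕ) < n₁ then
          (n₂ : ℝ) * (2 - (2 * n - n₁ - n₂ : ℝ) / ((n : ℝ)^2 - (n₁ : ℝ) * n₂))
            + ((n : ℝ) - n₂) * (1 + (n₂ : ℝ) / ((n : ℝ)^2 - (n₁ : ℝ) * n₂))
        else
          (n₂ : ℝ) * (1 + (n₁ : ℝ) / ((n : ℝ)^2 - (n₁ : ℝ) * n₂)) + ((n : ℝ) - n₂) * 0 := by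
      intro i
      by_cases hi : (i : ℕ) < n₁
      · rw [if_pos hi, ← sum_ite_lt_const n n₂ h2]
        apply Finset.sum_congr rfl
        intro j _
        rw [hζ]
        by_cases hj : (j : ℕ) < n₂
        · rw [if_pos ⟨hi, hj⟩, if_pos hj]
        · rw [if_neg (by tauto), if_pos hi, if_neg hj]
      · rw [if_neg hi, ← sum_ite_lt_const n n₂ h2]
        apply Finset.sum_congr rfl
        intro j _
        rw [hζ]
        by_cases hj : (j : ℕ) < n₂
        · rw [if_neg (by tauto), if_neg hi, if_pos hj]
        · rw [if_neg (by tauto), if_neg hi, if_neg hj]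
    calc ∑ i : Fin n, ∑ j : Fin n, ζ i j
        = ∑ i : Fin n, (if (i : ℕ) < n₁ then
          (n₂ : ℝ) * (2 - (2 * n - n₁ - n₂ : ℝ) / ((n : ℝ)^2 - (n₁ : ℝ) * n₂))
            + ((n : ℝ) - n₂) * (1 + (n₂ : ℝ) / ((n : ℝ)^2 - (n₁ : ℝ) * n₂))
        else
          (n₂ : ℝ) * (1 + (n₁ : ℝ) / ((n : ℝ)^2 - (n₁ : ℝ) * n₂)) + ((n : ℝ) - n₂) * 0) :=
          Finset.sum_congr rfl fun i _ => hrow i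
      _ = (n : ℝ) * ((n₁ : ℝ) + n₂) := by
          rw [sum_ite_lt_const n n₁ h1]
          field_simp
          ring
end
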